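/- Let F be a field of characteristic ≠ 2 and let a, b ∈ M₂(F) be traceless matrices that are linearly independent over F and satisfy det(a×b) = 0. Then there exists an invertible C ∈ M₂(F) such that C⁻¹aC and C⁻¹bC are both upper triangular; moreover, writing C⁻¹aC = [[a₃, 2a₁],[0, −a₃]] and C⁻¹bC = [[b₃, 2b₁],[0, −b₃]], one has (C⁻¹aC)×(C⁻¹bC) = [[0, 2(a₃b₁ − a₁b₃)],[0, 0]] and b₃·(C⁻¹aC) − a₃·(C⁻¹bC) + (C⁻¹aC)×(C⁻¹bC) = 0. -/

import Mathlib

open Matrix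

/-- The cross product of traceless 2×2 matrices: `a×b = (ab - ba)/2`. -/
noncomputable def matCross {F : Type*} [Field F] (a b : Matrix (Fin 2) (Fin 2) F) :
    Matrix (Fin 2) (Fin 2) F :=
  (2 : F)⁻¹ • (a * b - b * a)

section Aux

variable {F : Type*} [Field F]

lemma crossTriangle (h2 : (2 : F) ≠ 0) (a₁ a₃ b₁ b₃ : F) :
    matCross !![a₃, 2 * a₁; 0, -a₃] !![b₃, 2 * b₁; 0, -b₃]
      = !![0, 2 * (a₃ * b₁ - a₁ * b₃); 0, 0] := by
  unfold matCross
  rw [Matrix.mul_fin_two, Matrix.mul_fin_two]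
  ext i j
  fin_cases i <;> fin_cases j <;> simp [Matrix.smul_apply] <;>
    first | (right; ring) | (field_simp; ring)

lemma triForm (h2 : (2 : F) ≠ 0) (M : Matrix (Fin 2) (Fin 2) F)
    (htr : M.trace = 0) (h10 : M 1 0 = 0) :
    M = !![M 0 0, 2 * (M 0 1 / 2); 0, -(M 0 0)] := by
  rw [Matrix.trace_fin_two] at htr
  have h11 : M 1 1 = -(M 0 0) := by linear_combination htr
  have h01 : M 0 1 = 2 * (M 0 1 / 2) := by field_simp
  ext i j; fin_cases i <;> fin_cases j <;> simp [h10, h11, ← h01]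

lemma finalIdentity (h2 : (2 : F) ≠ 0) (a₁ a₃ b₁ b₃ : F) :
    b₃ • (!![a₃, 2 * a₁; 0, -a₃] : Matrix (Fin 2) (Fin 2) F) - a₃ • !![b₃, 2 * b₁; 0, -b₃] +
      matCross !![a₃, 2 * a₁; 0, -a₃] !![b₃, 2 * b₁; 0, -b₃] = 0 := by
  rw [crossTriangle h2]
  ext i j; fin_cases i <;> fin_cases j <;> simp [Matrix.smul_apply] <;> ring

lemma crossAnticomm (a b : Matrix (Fin 2) (Fin 2) F)
    (ha : a.trace = 0) (hb : b.trace = 0) :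
    matCross a b * a = -(a * matCross a b) := by
  rw [Matrix.trace_fin_two] at ha hb
  have ha' : a 1 1 = -a 0 0 := by linear_combination ha
  have hb' : b 1 1 = -b 0 0 := by linear_combination hb
  ext i j
  fin_cases i <;> fin_cases j <;>
    simp [matCross, Matrix.mul_apply, Fin.sum_univ_two, Matrix.smul_apply, ha', hb'] <;> ring

lemma crossSwap (a b : Matrix (Fin 2) (Fin 2) F) : matCross b a = -(matCross a b) := by
  unfold matCross
  rw [← smul_neg]
  congr 1
  abel

lemma kerVec (c : Matrix (Fin 2) (Fin 2) F) (hc : c ≠ 0)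
    (hd : c.det = 0) : ∃ v : Fin 2 → F, v ≠ 0 ∧ c *ᵥ v = 0 := by
  rw [Matrix.det_fin_two] at hd
  by_cases h0 : c 0 0 = 0 ∧ c 0 1 = 0
  · refine ⟨![c 1 1, -(c 1 0)], ?_, ?_⟩
    · intro h
      apply hc
      have h1 : c 1 1 = 0 := congrFun h 0
      have h2 : -(c 1 0) = 0 := congrFun h 1
      ext i j; fin_cases i <;> fin_cases j <;>
        simp [h0.1, h0.2, h1, neg_eq_zero.mp h2]
    · ext i; fin_cases i <;>
        (simp [Matrix.mulVec, dotProduct, Fin.sum_univ_two, h0.1, h0.2]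
         <;> first | ring1 | linear_combination hd | linear_combination -hd)
  · refine ⟨![c 0 1, -(c 0 0)], ?_, ?_⟩
    · intro h
      apply h0
      have h1 : c 0 1 = 0 := congrFun h 0
      have h2 : -(c 0 0) = 0 := congrFun h 1
      exact ⟨neg_eq_zero.mp h2, h1⟩
    · ext i; fin_cases i <;>
        (simp [Matrix.mulVec, dotProduct, Fin.sum_univ_two]
         <;> first | ring1 | linear_combination hd | linear_combination -hd)

lemma kerDep (c : Matrix (Fin 2) (Fin 2) F) (hc : c ≠ 0)
    (v u : Fin 2 → F) (hv : c *ᵥ v = 0) (hu : c *ᵥ u = 0) :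
    v 0 * u 1 - v 1 * u 0 = 0 := by
  by_contra hne
  apply hc
  have hD : IsUnit (Matrix.of ![![v 0, u 0], ![v 1, u 1]] : Matrix (Fin 2) (Fin 2) F) := by
    rw [Matrix.isUnit_iff_isUnit_det, Matrix.det_fin_two]
    simp only [Matrix.of_apply, Matrix.cons_val', Matrix.cons_val_zero, Matrix.cons_val_one,
      Matrix.head_cons, Matrix.empty_val', Matrix.cons_val_fin_one, Matrix.head_fin_const]
    exact isUnit_iff_ne_zero.mpr (by intro h; exact hne (by linear_combination h))
  have hcD : c * (Matrix.of ![![v 0, u 0], ![v 1, u 1]]) = 0 := by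
    ext i j
    fin_cases j
    · have := congrFun hv i
      simpa [Matrix.mul_apply, Matrix.mulVec, dotProduct, Fin.sum_univ_two] using this
    · have := congrFun hu i
      simpa [Matrix.mul_apply, Matrix.mulVec, dotProduct, Fin.sum_univ_two] using this
  calc c = c * (Matrix.of ![![v 0, u 0], ![v 1, u 1]]) *
        (Matrix.of ![![v 0, u 0], ![v 1, u 1]])⁻¹ := by
          rw [Matrix.mul_assoc,
            Matrix.mul_nonsing_inv _ ((Matrix.isUnit_iff_isUnit_det _).mp hD), Matrix.mul_one]
    _ = 0 := by rw [hcD, Matrix.zero_mul]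

lemma crossNeZero (h2 : (2 : F) ≠ 0)
    (a b : Matrix (Fin 2) (Fin 2) F) (ha : a.trace = 0) (hb : b.trace = 0)
    (hli : LinearIndependent F ![a, b]) : matCross a b ≠ 0 := by
  intro hc
  rw [linearIndependent_fin2] at hli
  obtain ⟨hb0, hsc⟩ := hli
  simp only [Matrix.cons_val_one, Matrix.head_cons, Matrix.cons_val_zero] at hb0 hsc
  have hcomm : a * b = b * a := by
    have h : (2 : F)⁻¹ • (a * b - b * a) = 0 := hc
    rcases smul_eq_zero.mp h with h | h
    · exact absurd h (inv_ne_zero h2)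
    · linear_combination (norm := abel) h
  rw [Matrix.trace_fin_two] at ha hb
  have ha' : a 1 1 = -a 0 0 := by linear_combination ha
  have hb' : b 1 1 = -b 0 0 := by linear_combination hb
  have E := fun i j => congrFun (congrFun hcomm i) j
  simp only [Matrix.mul_apply, Fin.sum_univ_two] at E
  have E00 := E 0 0; have E01 := E 0 1; have E10 := E 1 0
  rw [ha', hb'] at E01 E10
  have e1 : a 0 1 * b 1 0 = a 1 0 * b 0 1 := by linear_combination E00
  have e2 : a 0 0 * b 0 1 = a 0 1 * b 0 0 := by
    have h : 2 * (a 0 0 * b 0 1 - a 0 1 * b 0 0) = 0 := by linear_combination E01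
    rcases mul_eq_zero.mp h with h' | h'
    · exact absurd h' h2
    · linear_combination h'
  have e3 : a 1 0 * b 0 0 = a 0 0 * b 1 0 := by
    have h : 2 * (a 1 0 * b 0 0 - a 0 0 * b 1 0) = 0 := by linear_combination E10
    rcases mul_eq_zero.mp h with h' | h'
    · exact absurd h' h2
    · linear_combination h'
  have hbe : b 0 0 ≠ 0 ∨ b 0 1 ≠ 0 ∨ b 1 0 ≠ 0 := by
    by_contra h
    push_neg at h
    obtain ⟨h1, h2', h3⟩ := h
    apply hb0
    ext i j; fin_cases i <;> fin_cases j <;> simp [h1, h2', h3, hb']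
  have key : ∃ t : F, t • b = a := by
    rcases hbe with hx | hy | hz
    · refine ⟨a 0 0 / b 0 0, ?_⟩
      ext i j; fin_cases i <;> fin_cases j <;>
        simp [Matrix.smul_apply, ha', hb'] <;> field_simp <;>
        first
          | linear_combination e1 | linear_combination -e1
          | linear_combination e2 | linear_combination -e2
          | linear_combination e3 | linear_combination -e3
    · refine ⟨a 0 1 / b 0 1, ?_⟩
      ext i j; fin_cases i <;> fin_cases j <;>
        simp [Matrix.smul_apply, ha', hb'] <;> field_simp <;>
        first
          | linear_combination e1 | linear_combination -e1
          | linear_combination e2 | linear_combination -e2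
          | linear_combination e3 | linear_combination -e3
    · refine ⟨a 1 0 / b 1 0, ?_⟩
      ext i j; fin_cases i <;> fin_cases j <;>
        simp [Matrix.smul_apply, ha', hb'] <;> field_simp <;>
        first
          | linear_combination e1 | linear_combination -e1
          | linear_combination e2 | linear_combination -e2
          | linear_combination e3 | linear_combination -e3
  obtain ⟨t, ht⟩ := key
  exact hsc t ht

/-- If columns `v, w` form a basis and `v₀(av)₁ = v₁(av)₀`, the conjugate has zero
lower-left entry. -/
lemma triEntry (a : Matrix (Fin 2) (Fin 2) F) (v w : Fin 2 → F)
    (hd : v 0 * w 1 - w 0 * v 1 ≠ 0)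
    (hk : v 0 * (a *ᵥ v) 1 - v 1 * (a *ᵥ v) 0 = 0) :
    ((!![v 0, w 0; v 1, w 1] : Matrix (Fin 2) (Fin 2) F)⁻¹ * a
      * !![v 0, w 0; v 1, w 1]) 1 0 = 0 := by
  have hCinv : (!![v 0, w 0; v 1, w 1] : Matrix (Fin 2) (Fin 2) F)⁻¹
      = (v 0 * w 1 - w 0 * v 1)⁻¹ • !![w 1, -(w 0); -(v 1), v 0] := by
    apply Matrix.inv_eq_right_inv
    rw [Matrix.mul_smul, Matrix.mul_fin_two]
    ext i j
    fin_cases i <;> fin_cases j <;>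
      simp only [Fin.zero_eta, Fin.mk_one, Nat.reduceAdd, Nat.reduceEqDiff, Matrix.smul_apply, Matrix.of_apply, Matrix.cons_val', Matrix.cons_val_zero,
        Matrix.cons_val_one, Matrix.head_cons, Matrix.empty_val', Matrix.cons_val_fin_one,
        Matrix.head_fin_const, smul_eq_mul, Matrix.one_apply_eq, Matrix.one_apply_ne,
        Fin.zero_eq_one_iff, Fin.one_eq_zero_iff, Matrix.one_apply, if_false, Ne,
        OfNat.ofNat_ne_one, not_false_iff, one_ne_zero, ite_false, ite_true] <;>
      first | ring1 | (field_simp; ring1) | field_simp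
  rw [hCinv, Matrix.smul_mul, Matrix.smul_mul, Matrix.smul_apply]
  rw [Matrix.eta_fin_two a, Matrix.mul_fin_two, Matrix.mul_fin_two]
  simp only [Matrix.mulVec, dotProduct, Fin.sum_univ_two] at hk
  simp only [Matrix.of_apply, Matrix.cons_val', Matrix.cons_val_zero, Matrix.cons_val_one,
    Matrix.head_cons, Matrix.empty_val', Matrix.cons_val_fin_one, Matrix.head_fin_const,
    smul_eq_mul]
  linear_combination (v 0 * w 1 - w 0 * v 1)⁻¹ * hk

end Aux

/-- linearly independent traceless `a, b` with `det(a×b) = 0` can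
be simultaneously conjugated to upper triangular form
`C⁻¹aC = [[a₃, 2a₁],[0, −a₃]]`, `C⁻¹bC = [[b₃, 2b₁],[0, −b₃]]`, in which case
their cross product is `[[0, 2(a₃b₁ − a₁b₃)],[0, 0]]` and
`b₃·(C⁻¹aC) − a₃·(C⁻¹bC) + (C⁻¹aC)×(C⁻¹bC) = 0`. -/
theorem stmt13 {F : Type*} [Field F] (h2 : (2 : F) ≠ 0)
    (a b : Matrix (Fin 2) (Fin 2) F) (ha : a.trace = 0) (hb : b.trace = 0)
    (hli : LinearIndependent F ![a, b]) (hdet : (matCross a b).det = 0) :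
    ∃ (C : Matrix (Fin 2) (Fin 2) F) (a₁ a₃ b₁ b₃ : F), IsUnit C ∧
      C⁻¹ * a * C = !![a₃, 2 * a₁; 0, -a₃] ∧
      C⁻¹ * b * C = !![b₃, 2 * b₁; 0, -b₃] ∧
      matCross (C⁻¹ * a * C) (C⁻¹ * b * C) = !![0, 2 * (a₃ * b₁ - a₁ * b₃); 0, 0] ∧
      b₃ • (C⁻¹ * a * C) - a₃ • (C⁻¹ * b * C) +
        matCross (C⁻¹ * a * C) (C⁻¹ * b * C) = 0 := by
  set c := matCross a b with hc
  have hcne : c ≠ 0 := crossNeZero h2 a b ha hb hli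
  obtain ⟨v, hv0, hv⟩ := kerVec c hcne hdet
  -- a *ᵥ v and b *ᵥ v are in the kernel of c
  have hav : c *ᵥ (a *ᵥ v) = 0 := by
    rw [Matrix.mulVec_mulVec, crossAnticomm a b ha hb, Matrix.neg_mulVec,
      ← Matrix.mulVec_mulVec, hv, Matrix.mulVec_zero, neg_zero]
  have hbv : c *ᵥ (b *ᵥ v) = 0 := by
    have h1 : matCross b a * b = -(b * matCross b a) := crossAnticomm b a hb ha
    rw [crossSwap a b] at h1
    have h2' : c * b = -(b * c) := by
      have := congrArg Neg.neg h1
      simpa [Matrix.neg_mul, Matrix.mul_neg, neg_neg] using this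
    rw [Matrix.mulVec_mulVec, h2', Matrix.neg_mulVec, ← Matrix.mulVec_mulVec, hv,
      Matrix.mulVec_zero, neg_zero]
  have hka : v 0 * (a *ᵥ v) 1 - v 1 * (a *ᵥ v) 0 = 0 := kerDep c hcne v (a *ᵥ v) hv hav
  have hkb : v 0 * (b *ᵥ v) 1 - v 1 * (b *ᵥ v) 0 = 0 := kerDep c hcne v (b *ᵥ v) hv hbv
  -- choose a complement w
  obtain ⟨w, hd⟩ : ∃ w : Fin 2 → F, v 0 * w 1 - w 0 * v 1 ≠ 0 := by
    by_cases h : v 0 = 0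
    · refine ⟨![1, 0], ?_⟩
      have h1 : v 1 ≠ 0 := by
        intro h1
        apply hv0
        ext i; fin_cases i <;> simp [h, h1]
      simpa [h] using h1
    · exact ⟨![0, 1], by simpa using h⟩
  set C : Matrix (Fin 2) (Fin 2) F := !![v 0, w 0; v 1, w 1] with hC
  have hdetC : C.det ≠ 0 := by
    rw [hC, Matrix.det_fin_two_of]
    intro h
    exact hd (by linear_combination h)
  have hCu : IsUnit C := (Matrix.isUnit_iff_isUnit_det _).mpr (isUnit_iff_ne_zero.mpr hdetC)
  have hCC : C * C⁻¹ = 1 := Matrix.mul_nonsing_inv _ ((Matrix.isUnit_iff_isUnit_det _).mp hCu)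
  -- traces of conjugates
  have htrace : ∀ m : Matrix (Fin 2) (Fin 2) F, m.trace = 0 → (C⁻¹ * m * C).trace = 0 := by
    intro m hm
    rw [Matrix.mul_assoc, Matrix.trace_mul_comm, Matrix.mul_assoc, hCC, Matrix.mul_one, hm]
  have hMa10 : (C⁻¹ * a * C) 1 0 = 0 := triEntry a v w hd hka
  have hMb10 : (C⁻¹ * b * C) 1 0 = 0 := triEntry b v w hd hkb
  obtain ⟨a₃, a₁, hMa⟩ : ∃ x y, C⁻¹ * a * C = !![x, 2 * y; 0, -x] :=
    ⟨_, _, triForm h2 _ (htrace a ha) hMa10⟩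
  obtain ⟨b₃, b₁, hMb⟩ : ∃ x y, C⁻¹ * b * C = !![x, 2 * y; 0, -x] :=
    ⟨_, _, triForm h2 _ (htrace b hb) hMb10⟩
  refine ⟨C, a₁, a₃, b₁, b₃, hCu, hMa, hMb, ?_, ?_⟩
  · rw [hMa, hMb]; exact crossTriangle h2 _ _ _ _
  · rw [hMa, hMb]; exact finalIdentity h2 _ _ _ _
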